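/- Let L be a natural number, P a finite type, and γ₀, γ∞ : P → Fin L × Fin L two injective maps. Then there exists a coloring η : P → Fin L such that for every color k : Fin L, the map sending p to the first coordinate of γ₀(p) is injective on {p : η p = k}, and the map sending p to the second coordinate of γ∞(p) is injective on {p : η p = k}. -/

import Mathlib

open Finset

private lemma list_sum_map_toList {α : Type*} (s : Finset α) (g : α → ℕ) :
    (s.toList.map g).sum = ∑ x ∈ s, g x := by
  rw [← Multiset.sum_coe, ← Multiset.map_coe, Finset.coe_toList]; rfl

private lemma countP_flatMap_replicate {α : Type*} [DecidableEq α] [Fintype α]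
    (g : α → ℕ) (A : Finset α) :
    (((Finset.univ : Finset α).toList.flatMap fun a => List.replicate (g a) a).countP
      fun x => decide (x ∈ A)) = ∑ a ∈ A, g a := by
  rw [List.countP_flatMap]
  have h1 : ((Finset.univ : Finset α).toList.map
      (List.countP (fun x => decide (x ∈ A)) ∘ fun a => List.replicate (g a) a))
      = (Finset.univ : Finset α).toList.map (fun a => if a ∈ A then g a else 0) := by
    apply List.map_congr_left
    intro a _
    simp [List.countP_replicate]
  rw [h1, list_sum_map_toList, Finset.sum_ite_mem]
  simp

private lemma mem_flatMap_replicate {α : Type*} [DecidableEq α] [Fintype α]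
    (g : α → ℕ) (r : α) (hg : g r = 0) :
    r ∉ ((Finset.univ : Finset α).toList.flatMap fun a => List.replicate (g a) a) := by
  intro h
  rw [List.mem_flatMap] at h
  obtain ⟨a, -, ha⟩ := h
  rw [List.mem_replicate] at ha
  obtain ⟨hne, heq⟩ := ha
  subst heq
  exact hne hg

section ColorRouting
variable {n : ℕ} {P : Type} [Fintype P] [DecidableEq P]

private lemma exists_matching (row col : P → Fin n) (l : ℕ) (hl : 0 < l) (S : Finset P)
    (hrow : ∀ r, (S.filter fun p => row p = r).card ≤ l)
    (hcol : ∀ c, (S.filter fun p => col p = c).card ≤ l) :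
    ∃ M : Finset P, M ⊆ S ∧ Set.InjOn row M ∧ Set.InjOn col M ∧
      (∀ r, (S.filter fun p => row p = r).card = l → ∃ p ∈ M, row p = r) ∧
      (∀ c, (S.filter fun p => col p = c).card = l → ∃ p ∈ M, col p = c) := by
  classical
  set d : Fin n → ℕ := fun r => (S.filter fun p => row p = r).card with hd
  set e : Fin n → ℕ := fun c => (S.filter fun p => col p = c).card with he
  set LR : List (Fin n) :=
    (Finset.univ : Finset (Fin n)).toList.flatMap fun r => List.replicate (l - d r) r with hLR
  set LC : List (Fin n) :=
    (Finset.univ : Finset (Fin n)).toList.flatMap fun c => List.replicate (l - e c) c with hLC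
  have hsumd : ∑ r, d r = S.card :=
    (Finset.card_eq_sum_card_fiberwise (f := row) (t := Finset.univ)
      (fun x _ => Finset.mem_univ _)).symm
  have hsume : ∑ c, e c = S.card :=
    (Finset.card_eq_sum_card_fiberwise (f := col) (t := Finset.univ)
      (fun x _ => Finset.mem_univ _)).symm
  have hlenR : LR.length = ∑ r, (l - d r) := by
    rw [hLR, List.length_flatMap]
    have h2 : ((Finset.univ : Finset (Fin n)).toList.map
        (List.length ∘ fun r => List.replicate (l - d r) r)) =
        (Finset.univ : Finset (Fin n)).toList.map fun r => (l - d r) := by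
      apply List.map_congr_left; intro a _; simp
    simp only [List.length_replicate]; exact list_sum_map_toList _ _
  have hlenC : LC.length = ∑ c, (l - e c) := by
    rw [hLC, List.length_flatMap]
    have h2 : ((Finset.univ : Finset (Fin n)).toList.map
        (List.length ∘ fun c => List.replicate (l - e c) c)) =
        (Finset.univ : Finset (Fin n)).toList.map fun c => (l - e c) := by
      apply List.map_congr_left; intro a _; simp
    simp only [List.length_replicate]; exact list_sum_map_toList _ _
  have hlen : LR.length = LC.length := by
    rw [hlenR, hlenC]
    have h1 : ∑ r, (l - d r) + ∑ r, d r = n * l := by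
      rw [← Finset.sum_add_distrib]
      have h3 : ∀ r : Fin n, (l - d r) + d r = l := fun r => Nat.sub_add_cancel (hrow r)
      simp only [h3]
      simp [Finset.sum_const, mul_comm]
    have h2 : ∑ c, (l - e c) + ∑ c, e c = n * l := by
      rw [← Finset.sum_add_distrib]
      have h3 : ∀ c : Fin n, (l - e c) + e c = l := fun c => Nat.sub_add_cancel (hcol c)
      simp only [h3]
      simp [Finset.sum_const, mul_comm]
    omega
  set Z : List (Fin n × Fin n) := LR.zip LC with hZ
  have hZfst : Z.map Prod.fst = LR := List.map_fst_zip hlen.le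
  have hZsnd : Z.map Prod.snd = LC := List.map_snd_zip hlen.ge
  set t : Fin n → Finset (Fin n) := fun r =>
    ((S.filter fun p => row p = r).image col) ∪
      ((Z.filter fun u => u.1 = r).map Prod.snd).toFinset with ht
  have hall : ∀ A : Finset (Fin n), A.card ≤ (A.biUnion t).card := by
    intro A
    set B := A.biUnion t with hB
    have htB : ∀ r ∈ A, t r ⊆ B := fun r hr => Finset.subset_biUnion_of_mem t hr
    have hrealA : (S.filter fun p => row p ∈ A).card = ∑ r ∈ A, d r := by
      rw [Finset.card_eq_sum_card_fiberwise (f := row) (s := S.filter fun p => row p ∈ A) (t := A)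
        (fun x hx => (Finset.mem_filter.mp hx).2)]
      apply Finset.sum_congr rfl
      intro r hr
      rw [hd]
      congr 1
      ext p
      simp only [Finset.mem_filter]
      constructor
      · rintro ⟨⟨h1, -⟩, h2⟩; exact ⟨h1, h2⟩
      · rintro ⟨h1, h2⟩; exact ⟨⟨h1, h2 ▸ hr⟩, h2⟩
    have hdumA : Z.countP (fun u => decide (u.1 ∈ A)) = ∑ r ∈ A, (l - d r) := by
      have h2 := List.countP_map (p := fun x => decide (x ∈ A)) (f := Prod.fst) (l := Z)
      rw [hZfst] at h2
      rw [show (fun u : Fin n × Fin n => decide (u.1 ∈ A)) =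
        ((fun x => decide (x ∈ A)) ∘ Prod.fst) from rfl, ← h2,
        hLR, countP_flatMap_replicate]
    have hdumB : Z.countP (fun u => decide (u.2 ∈ B)) = ∑ c ∈ B, (l - e c) := by
      have h2 := List.countP_map (p := fun x => decide (x ∈ B)) (f := Prod.snd) (l := Z)
      rw [hZsnd] at h2
      rw [show (fun u : Fin n × Fin n => decide (u.2 ∈ B)) =
        ((fun x => decide (x ∈ B)) ∘ Prod.snd) from rfl, ← h2,
        hLC, countP_flatMap_replicate]
    have hrealB : (S.filter fun p => col p ∈ B).card = ∑ c ∈ B, e c := by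
      rw [Finset.card_eq_sum_card_fiberwise (f := col) (s := S.filter fun p => col p ∈ B) (t := B)
        (fun x hx => (Finset.mem_filter.mp hx).2)]
      apply Finset.sum_congr rfl
      intro c hc
      rw [he]
      congr 1
      ext p
      simp only [Finset.mem_filter]
      constructor
      · rintro ⟨⟨h1, -⟩, h2⟩; exact ⟨h1, h2⟩
      · rintro ⟨h1, h2⟩; exact ⟨⟨h1, h2 ▸ hc⟩, h2⟩
    have hreal_le : (S.filter fun p => row p ∈ A).card ≤
        (S.filter fun p => col p ∈ B).card := by
      apply Finset.card_le_card
      intro p hp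
      rw [Finset.mem_filter] at hp ⊢
      refine ⟨hp.1, ?_⟩
      apply htB (row p) hp.2
      rw [ht]
      apply Finset.mem_union_left
      exact Finset.mem_image.mpr ⟨p, Finset.mem_filter.mpr ⟨hp.1, rfl⟩, rfl⟩
    have hdum_le : Z.countP (fun u => decide (u.1 ∈ A)) ≤
        Z.countP (fun u => decide (u.2 ∈ B)) := by
      apply List.countP_mono_left
      intro u hu h1
      simp only [decide_eq_true_eq] at h1 ⊢
      apply htB u.1 h1
      rw [ht]
      apply Finset.mem_union_right
      rw [List.mem_toFinset, List.mem_map]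
      exact ⟨u, List.mem_filter.mpr ⟨hu, by simp⟩, rfl⟩
    have hEA : l * A.card = (S.filter fun p => row p ∈ A).card +
        Z.countP (fun u => decide (u.1 ∈ A)) := by
      rw [hrealA, hdumA, ← Finset.sum_add_distrib]
      have h3 : ∀ r : Fin n, d r + (l - d r) = l := fun r => Nat.add_sub_cancel' (hrow r)
      simp only [h3]
      simp [Finset.sum_const, mul_comm]
    have hEB : (S.filter fun p => col p ∈ B).card +
        Z.countP (fun u => decide (u.2 ∈ B)) = l * B.card := by
      rw [hrealB, hdumB, ← Finset.sum_add_distrib]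
      have h3 : ∀ c : Fin n, e c + (l - e c) = l := fun c => Nat.add_sub_cancel' (hcol c)
      simp only [h3]
      simp [Finset.sum_const, mul_comm]
    have hmul : l * A.card ≤ l * B.card := by
      rw [hEA, ← hEB]
      exact Nat.add_le_add hreal_le hdum_le
    exact Nat.le_of_mul_le_mul_left hmul hl
  obtain ⟨f, hfinj, hft⟩ := (Finset.all_card_le_biUnion_card_iff_exists_injective t).mp hall
  set g : Fin n → Finset P := fun r => S.filter fun p => row p = r ∧ col p = f r with hg
  set pick : Fin n → Finset P :=
    fun r => if h : (g r).Nonempty then {h.choose} else ∅ with hpick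
  set M : Finset P := Finset.univ.biUnion pick with hM
  have hpick_sub : ∀ r, ∀ p ∈ pick r, p ∈ g r := by
    intro r p hp
    have hp' : p ∈ (if h : (g r).Nonempty then ({h.choose} : Finset P) else ∅) := hp
    clear hp
    rename' hp' => hp
    split_ifs at hp with h
    · rw [Finset.mem_singleton] at hp
      rw [hp]
      exact h.choose_spec
    · exact absurd hp (Finset.notMem_empty p)
  have hpick_uniq : ∀ r, ∀ p ∈ pick r, ∀ q ∈ pick r, p = q := by
    intro r p hp q hq
    have hp' : p ∈ (if h : (g r).Nonempty then ({h.choose} : Finset P) else ∅) := hp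
    have hq' : q ∈ (if h : (g r).Nonempty then ({h.choose} : Finset P) else ∅) := hq
    clear hp hq
    rename' hp' => hp, hq' => hq
    split_ifs at hp hq with h
    · rw [Finset.mem_singleton] at hp hq
      rw [hp, hq]
    · exact absurd hp (Finset.notMem_empty p)
  have hg_mem : ∀ r, ∀ p ∈ g r, p ∈ S ∧ row p = r ∧ col p = f r := by
    intro r p hp
    rw [hg, Finset.mem_filter] at hp
    exact ⟨hp.1, hp.2.1, hp.2.2⟩
  have hmemM : ∀ p ∈ M, ∃ r, p ∈ pick r := by
    intro p hp
    rw [hM, Finset.mem_biUnion] at hp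
    obtain ⟨r, -, hpr⟩ := hp
    exact ⟨r, hpr⟩
  have hrowM : Set.InjOn row M := by
    intro p hp q hq hpq
    obtain ⟨r1, hp1⟩ := hmemM p hp
    obtain ⟨r2, hq1⟩ := hmemM q hq
    have e1 := (hg_mem r1 p (hpick_sub r1 p hp1)).2.1
    have e2 := (hg_mem r2 q (hpick_sub r2 q hq1)).2.1
    have : r1 = r2 := by rw [← e1, ← e2, hpq]
    subst this
    exact hpick_uniq r1 p hp1 q hq1
  have hcolM : Set.InjOn col M := by
    intro p hp q hq hpq
    obtain ⟨r1, hp1⟩ := hmemM p hp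
    obtain ⟨r2, hq1⟩ := hmemM q hq
    have e1 := (hg_mem r1 p (hpick_sub r1 p hp1)).2.2
    have e2 := (hg_mem r2 q (hpick_sub r2 q hq1)).2.2
    have : r1 = r2 := hfinj (by rw [← e1, ← e2, hpq])
    subst this
    exact hpick_uniq r1 p hp1 q hq1
  have hchooseM : ∀ r, ∀ h : (g r).Nonempty, h.choose ∈ M := by
    intro r h
    rw [hM, Finset.mem_biUnion]
    refine ⟨r, Finset.mem_univ r, ?_⟩
    show h.choose ∈ (if h : (g r).Nonempty then ({h.choose} : Finset P) else ∅)
    rw [dif_pos h]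
    exact Finset.mem_singleton_self _
  have hreal_t : ∀ r, (∀ u ∈ Z, u.1 = r → u.2 ≠ f r) → (g r).Nonempty := by
    intro r hz
    have hfr := hft r
    rw [ht] at hfr
    rcases Finset.mem_union.mp hfr with hfr | hfr
    · obtain ⟨p, hp, hcp⟩ := Finset.mem_image.mp hfr
      rw [Finset.mem_filter] at hp
      exact ⟨p, by rw [hg, Finset.mem_filter]; exact ⟨hp.1, hp.2, hcp⟩⟩
    · rw [List.mem_toFinset, List.mem_map] at hfr
      obtain ⟨u, hu, hu2⟩ := hfr
      rw [List.mem_filter] at hu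
      exact absurd hu2 (hz u hu.1 (by simpa using hu.2))
  have hnotfst : ∀ r, l - d r = 0 → ∀ u ∈ Z, u.1 ≠ r := by
    intro r h0 u hu heq
    have hmem : u.1 ∈ Z.map Prod.fst := List.mem_map.mpr ⟨u, hu, rfl⟩
    rw [hZfst, hLR] at hmem
    exact mem_flatMap_replicate (fun a => l - d a) r h0 (heq ▸ hmem)
  have hnotsnd : ∀ c, l - e c = 0 → ∀ u ∈ Z, u.2 ≠ c := by
    intro c h0 u hu heq
    have hmem : u.2 ∈ Z.map Prod.snd := List.mem_map.mpr ⟨u, hu, rfl⟩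
    rw [hZsnd, hLC] at hmem
    exact mem_flatMap_replicate (fun a => l - e a) c h0 (heq ▸ hmem)
  refine ⟨M, ?_, hrowM, hcolM, ?_, ?_⟩
  · intro p hp
    obtain ⟨r, hp1⟩ := hmemM p hp
    exact (hg_mem r p (hpick_sub r p hp1)).1
  · intro r hr
    have h0 : l - d r = 0 := by
      have : d r = l := hr
      omega
    have hne := hreal_t r (fun u hu heq _ => hnotfst r h0 u hu heq)
    refine ⟨hne.choose, hchooseM r hne, ?_⟩
    exact (hg_mem r _ hne.choose_spec).2.1
  · intro c hc
    have h0 : l - e c = 0 := by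
      have : e c = l := hc
      omega
    obtain ⟨r, hr⟩ := (Finite.injective_iff_surjective.mp hfinj) c
    have hne := hreal_t r (fun u hu _ heq => hnotsnd c h0 u hu (by rw [heq, hr]))
    refine ⟨hne.choose, hchooseM r hne, ?_⟩
    rw [(hg_mem r _ hne.choose_spec).2.2, hr]

private lemma key_coloring (row col : P → Fin n) :
    ∀ (l : ℕ) (S : Finset P),
      (∀ r, (S.filter fun p => row p = r).card ≤ l) →
      (∀ c, (S.filter fun p => col p = c).card ≤ l) →
      ∃ η : P → ℕ, (∀ p ∈ S, η p < l) ∧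
        ∀ k : ℕ, Set.InjOn row {p | p ∈ S ∧ η p = k} ∧
          Set.InjOn col {p | p ∈ S ∧ η p = k} := by
  intro l
  induction l with
  | zero =>
    intro S hrow _
    have hS : S = ∅ := by
      by_contra h
      obtain ⟨p, hp⟩ := Finset.nonempty_iff_ne_empty.mpr h
      have := hrow (row p)
      have hmem : p ∈ S.filter fun q => row q = row p :=
        Finset.mem_filter.mpr ⟨hp, rfl⟩
      have := Finset.card_pos.mpr ⟨p, hmem⟩
      omega
    subst hS
    exact ⟨fun _ => 0, fun p hp => absurd hp (Finset.notMem_empty p),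
      fun k => ⟨fun p hp => absurd hp.1 (Finset.notMem_empty p),
        fun p hp => absurd hp.1 (Finset.notMem_empty p)⟩⟩
  | succ m ih =>
    intro S hrow hcol
    obtain ⟨M, hMS, hMrow, hMcol, hcovr, hcovc⟩ :=
      exists_matching row col (m + 1) (Nat.succ_pos m) S hrow hcol
    have hrow' : ∀ r, ((S \ M).filter fun p => row p = r).card ≤ m := by
      intro r
      by_cases h : (S.filter fun p => row p = r).card = m + 1
      · obtain ⟨p, hpM, hpr⟩ := hcovr r h
        have hsub : ((S \ M).filter fun q => row q = r) ⊆
            (S.filter fun q => row q = r).erase p := by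
          intro q hq
          rw [Finset.mem_filter, Finset.mem_sdiff] at hq
          rw [Finset.mem_erase, Finset.mem_filter]
          exact ⟨fun hqp => hq.1.2 (hqp ▸ hpM), hq.1.1, hq.2⟩
        have := Finset.card_le_card hsub
        rw [Finset.card_erase_of_mem (Finset.mem_filter.mpr ⟨hMS hpM, hpr⟩), h] at this
        omega
      · have h1 : ((S \ M).filter fun q => row q = r) ⊆ (S.filter fun q => row q = r) := by
          intro q hq
          rw [Finset.mem_filter, Finset.mem_sdiff] at hq
          exact Finset.mem_filter.mpr ⟨hq.1.1, hq.2⟩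
        have := Finset.card_le_card h1
        have := hrow r
        omega
    have hcol' : ∀ c, ((S \ M).filter fun p => col p = c).card ≤ m := by
      intro c
      by_cases h : (S.filter fun p => col p = c).card = m + 1
      · obtain ⟨p, hpM, hpc⟩ := hcovc c h
        have hsub : ((S \ M).filter fun q => col q = c) ⊆
            (S.filter fun q => col q = c).erase p := by
          intro q hq
          rw [Finset.mem_filter, Finset.mem_sdiff] at hq
          rw [Finset.mem_erase, Finset.mem_filter]
          exact ⟨fun hqp => hq.1.2 (hqp ▸ hpM), hq.1.1, hq.2⟩
        have := Finset.card_le_card hsub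
        rw [Finset.card_erase_of_mem (Finset.mem_filter.mpr ⟨hMS hpM, hpc⟩), h] at this
        omega
      · have h1 : ((S \ M).filter fun q => col q = c) ⊆ (S.filter fun q => col q = c) := by
          intro q hq
          rw [Finset.mem_filter, Finset.mem_sdiff] at hq
          exact Finset.mem_filter.mpr ⟨hq.1.1, hq.2⟩
        have := Finset.card_le_card h1
        have := hcol c
        omega
    obtain ⟨η, hηlt, hηinj⟩ := ih (S \ M) hrow' hcol'
    classical
    refine ⟨fun p => if p ∈ M then m else η p, ?_, ?_⟩
    · intro p hp
      show (if p ∈ M then m else η p) < m + 1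
      split_ifs with h
      · omega
      · have := hηlt p (Finset.mem_sdiff.mpr ⟨hp, h⟩)
        omega
    · intro k
      by_cases hk : k = m
      · have hsub : {p | p ∈ S ∧ (if p ∈ M then m else η p) = k} ⊆ (M : Set P) := by
          intro p hp
          obtain ⟨hpS, hpv⟩ := hp
          by_contra hpM
          have hpM' : p ∉ M := fun h => hpM h
          rw [if_neg hpM'] at hpv
          have := hηlt p (Finset.mem_sdiff.mpr ⟨hpS, hpM'⟩)
          omega
        exact ⟨hMrow.mono hsub, hMcol.mono hsub⟩
      · have hsub : {p | p ∈ S ∧ (if p ∈ M then m else η p) = k} ⊆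
            {p | p ∈ (S \ M) ∧ η p = k} := by
          intro p hp
          obtain ⟨hpS, hpv⟩ := hp
          by_cases hpM : p ∈ M
          · rw [if_pos hpM] at hpv
            exact absurd hpv.symm hk
          · rw [if_neg hpM] at hpv
            exact ⟨Finset.mem_sdiff.mpr ⟨hpS, hpM⟩, hpv⟩
        exact ⟨(hηinj k).1.mono hsub, (hηinj k).2.mono hsub⟩

end ColorRouting

/-- **2D Color Routing (reformulated).**
Given a finite set of packets `P` with injective source and destination maps
`γ₀, γ∞ : P → Fin L × Fin L` into the 2D grid, there is a coloring `η : P → Fin L`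
such that within each color class, the sources have pairwise distinct rows
(first coordinates) and the destinations have pairwise distinct columns
(second coordinates). -/
theorem stmt0 (L : ℕ) (P : Type) [Fintype P]
    (γ₀ γinf : P → Fin L × Fin L)
    (h₀ : Function.Injective γ₀) (hinf : Function.Injective γinf) :
    ∃ η : P → Fin L, ∀ k : Fin L,
      Set.InjOn (fun p => (γ₀ p).1) {p | η p = k} ∧
      Set.InjOn (fun p => (γinf p).2) {p | η p = k} := by
  classical
  set row : P → Fin L := fun p => (γ₀ p).1 with hrowdef
  set col : P → Fin L := fun p => (γinf p).2 with hcoldef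
  have hrow : ∀ r, ((Finset.univ : Finset P).filter fun p => row p = r).card ≤ L := by
    intro r
    have hinj : Set.InjOn (fun p => (γ₀ p).2)
        ↑((Finset.univ : Finset P).filter fun p => row p = r) := by
      intro p hp q hq hpq
      simp only [Finset.coe_filter, Set.mem_setOf_eq] at hp hq
      apply h₀
      exact Prod.ext (hp.2.trans hq.2.symm) hpq
    calc ((Finset.univ : Finset P).filter fun p => row p = r).card
        ≤ (Finset.univ : Finset (Fin L)).card :=
          Finset.card_le_card_of_injOn _ (fun p _ => Finset.mem_univ _) hinj
      _ = L := by simp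
  have hcol : ∀ c, ((Finset.univ : Finset P).filter fun p => col p = c).card ≤ L := by
    intro c
    have hinj : Set.InjOn (fun p => (γinf p).1)
        ↑((Finset.univ : Finset P).filter fun p => col p = c) := by
      intro p hp q hq hpq
      simp only [Finset.coe_filter, Set.mem_setOf_eq] at hp hq
      apply hinf
      exact Prod.ext hpq (hp.2.trans hq.2.symm)
    calc ((Finset.univ : Finset P).filter fun p => col p = c).card
        ≤ (Finset.univ : Finset (Fin L)).card :=
          Finset.card_le_card_of_injOn _ (fun p _ => Finset.mem_univ _) hinj
      _ = L := by simp
  obtain ⟨η, hηlt, hηinj⟩ := key_coloring row col L Finset.univ hrow hcol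
  refine ⟨fun p => ⟨η p, hηlt p (Finset.mem_univ p)⟩, ?_⟩
  intro k
  have hsub : {p : P | (⟨η p, hηlt p (Finset.mem_univ p)⟩ : Fin L) = k} ⊆
      {p | p ∈ (Finset.univ : Finset P) ∧ η p = (k : ℕ)} := by
    intro p hp
    refine ⟨Finset.mem_univ p, ?_⟩
    have := congrArg Fin.val hp
    simpa using this
  exact ⟨(hηinj k).1.mono hsub, (hηinj k).2.mono hsub⟩
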